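/- Non-triviality of C: although C is negation inconsistent, it is non-trivial; in particular, for a propositional variable p, the sequent ⇒ p (with empty antecedent) is not derivable in G3C, so not every formula is a theorem of C. -/
import Mathlib


/-- Formulas of the connexive logic C: propositional variables, strong
negation `∼`, conjunction, disjunction and implication. -/
inductive Formula : Type
  | var : Nat → Formula
  | snot : Formula → Formula
  | and : Formula → Formula → Formula
  | or : Formula → Formula → Formula
  | imp : Formula → Formula → Formula
deriving DecidableEq
/-- Derivability of sequents `Γ ⇒ A` (with `Γ` a finite multiset of formulas)
in the sequent calculus `G3C` for the connexive logic `C`. -/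
inductive Gder : Multiset Formula → Formula → Prop
  | ax {Γ n} : Gder (.var n ::ₘ Γ) (.var n)
  | axSnot {Γ n} : Gder (.snot (.var n) ::ₘ Γ) (.snot (.var n))
  | andR {Γ A B} : Gder Γ A → Gder Γ B → Gder Γ (.and A B)
  | andL {Γ A B C} : Gder (A ::ₘ B ::ₘ Γ) C → Gder (.and A B ::ₘ Γ) C
  | orR₁ {Γ A B} : Gder Γ A → Gder Γ (.or A B)
  | orR₂ {Γ A B} : Gder Γ B → Gder Γ (.or A B)
  | orL {Γ A B C} : Gder (A ::ₘ Γ) C → Gder (B ::ₘ Γ) C → Gder (.or A B ::ₘ Γ) C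
  | impR {Γ A B} : Gder (A ::ₘ Γ) B → Gder Γ (.imp A B)
  | impL {Γ A B C} : Gder (.imp A B ::ₘ Γ) A → Gder (B ::ₘ Γ) C → Gder (.imp A B ::ₘ Γ) C
  | snotSnotR {Γ A} : Gder Γ A → Gder Γ (.snot (.snot A))
  | snotSnotL {Γ A C} : Gder (A ::ₘ Γ) C → Gder (.snot (.snot A) ::ₘ Γ) C
  | snotAndR₁ {Γ A B} : Gder Γ (.snot A) → Gder Γ (.snot (.and A B))
  | snotAndR₂ {Γ A B} : Gder Γ (.snot B) → Gder Γ (.snot (.and A B))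
  | snotAndL {Γ A B C} : Gder (.snot A ::ₘ Γ) C → Gder (.snot B ::ₘ Γ) C →
      Gder (.snot (.and A B) ::ₘ Γ) C
  | snotOrR {Γ A B} : Gder Γ (.snot A) → Gder Γ (.snot B) → Gder Γ (.snot (.or A B))
  | snotOrL {Γ A B C} : Gder (.snot A ::ₘ .snot B ::ₘ Γ) C → Gder (.snot (.or A B) ::ₘ Γ) C
  | snotImpR {Γ A B} : Gder (A ::ₘ Γ) (.snot B) → Gder Γ (.snot (.imp A B))
  | snotImpL {Γ A B C} : Gder (.snot (.imp A B) ::ₘ Γ) A → Gder (.snot B ::ₘ Γ) C →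
      Gder (.snot (.imp A B) ::ₘ Γ) C

/-- Boolean countermodel: first component is truth, second is truth of the
strong negation, with all propositional variables (and their negations) false. -/
def ev : Formula → Bool × Bool
  | .var _ => (false, false)
  | .snot A => ((ev A).2, (ev A).1)
  | .and A B => ((ev A).1 && (ev B).1, (ev A).2 || (ev B).2)
  | .or A B => ((ev A).1 || (ev B).1, (ev A).2 && (ev B).2)
  | .imp A B => (!(ev A).1 || (ev B).1, !(ev A).1 || (ev B).2)

lemma ev_sound {Γ : Multiset Formula} {C : Formula} (d : Gder Γ C) :
    (∀ X ∈ Γ, (ev X).1 = true) → (ev C).1 = true := by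
  induction d with
  | ax => intro h; exact h _ (Multiset.mem_cons_self _ _)
  | axSnot => intro h; exact h _ (Multiset.mem_cons_self _ _)
  | andR _ _ ih1 ih2 => intro h; simp [ev, ih1 h, ih2 h]
  | andL _ ih =>
    intro h
    have hab := h _ (Multiset.mem_cons_self _ _)
    simp only [ev, Bool.and_eq_true] at hab
    apply ih
    intro X hX
    rcases Multiset.mem_cons.1 hX with rfl | hX
    · exact hab.1
    rcases Multiset.mem_cons.1 hX with rfl | hX
    · exact hab.2
    · exact h _ (Multiset.mem_cons_of_mem hX)
  | orR₁ _ ih => intro h; simp [ev, ih h]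
  | orR₂ _ ih => intro h; simp [ev, ih h]
  | orL _ _ ih1 ih2 =>
    intro h
    have hab := h _ (Multiset.mem_cons_self _ _)
    simp only [ev, Bool.or_eq_true] at hab
    rcases hab with ha | hb
    · apply ih1; intro X hX
      rcases Multiset.mem_cons.1 hX with rfl | hX
      · exact ha
      · exact h _ (Multiset.mem_cons_of_mem hX)
    · apply ih2; intro X hX
      rcases Multiset.mem_cons.1 hX with rfl | hX
      · exact hb
      · exact h _ (Multiset.mem_cons_of_mem hX)
  | @impR Γ A B _ ih =>
    intro h
    simp only [ev, Bool.or_eq_true, Bool.not_eq_true']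
    by_cases ha : (ev A).1 = true
    · right; apply ih; intro X hX
      rcases Multiset.mem_cons.1 hX with rfl | hX
      · exact ha
      · exact h _ hX
    · left; simpa using ha
  | @impL Γ A B C _ _ ih1 ih2 =>
    intro h
    have hA : (ev A).1 = true := ih1 h
    have himp := h _ (Multiset.mem_cons_self _ _)
    simp only [ev, Bool.or_eq_true, Bool.not_eq_true'] at himp
    have hB : (ev B).1 = true := by
      rcases himp with h' | h'
      · rw [hA] at h'; cases h'
      · exact h'
    apply ih2; intro X hX
    rcases Multiset.mem_cons.1 hX with rfl | hX
    · exact hB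
    · exact h _ (Multiset.mem_cons_of_mem hX)
  | snotSnotR _ ih => intro h; simpa [ev] using ih h
  | snotSnotL _ ih =>
    intro h
    have ha := h _ (Multiset.mem_cons_self _ _)
    simp only [ev] at ha
    apply ih; intro X hX
    rcases Multiset.mem_cons.1 hX with rfl | hX
    · exact ha
    · exact h _ (Multiset.mem_cons_of_mem hX)
  | snotAndR₁ _ ih => intro h; have := ih h; simp only [ev] at this ⊢; simp [this]
  | snotAndR₂ _ ih => intro h; have := ih h; simp only [ev] at this ⊢; simp [this]
  | snotAndL _ _ ih1 ih2 =>
    intro h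
    have hab := h _ (Multiset.mem_cons_self _ _)
    simp only [ev, Bool.or_eq_true] at hab
    rcases hab with ha | hb
    · apply ih1; intro X hX
      rcases Multiset.mem_cons.1 hX with rfl | hX
      · simpa [ev] using ha
      · exact h _ (Multiset.mem_cons_of_mem hX)
    · apply ih2; intro X hX
      rcases Multiset.mem_cons.1 hX with rfl | hX
      · simpa [ev] using hb
      · exact h _ (Multiset.mem_cons_of_mem hX)
  | snotOrR _ _ ih1 ih2 =>
    intro h
    have h1 := ih1 h
    have h2 := ih2 h
    simp only [ev] at h1 h2 ⊢
    simp [h1, h2]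
  | snotOrL _ ih =>
    intro h
    have hab := h _ (Multiset.mem_cons_self _ _)
    simp only [ev, Bool.and_eq_true] at hab
    apply ih; intro X hX
    rcases Multiset.mem_cons.1 hX with rfl | hX
    · simpa [ev] using hab.1
    rcases Multiset.mem_cons.1 hX with rfl | hX
    · simpa [ev] using hab.2
    · exact h _ (Multiset.mem_cons_of_mem hX)
  | @snotImpR Γ A B _ ih =>
    intro h
    simp only [ev, Bool.or_eq_true, Bool.not_eq_true']
    by_cases ha : (ev A).1 = true
    · right
      have := ih (by
        intro X hX
        rcases Multiset.mem_cons.1 hX with rfl | hX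
        · exact ha
        · exact h _ hX)
      simpa [ev] using this
    · left; simpa using ha
  | @snotImpL Γ A B C _ _ ih1 ih2 =>
    intro h
    have hA : (ev A).1 = true := ih1 h
    have himp := h _ (Multiset.mem_cons_self _ _)
    simp only [ev, Bool.or_eq_true, Bool.not_eq_true'] at himp
    have hB : (ev B).2 = true := by
      rcases himp with h' | h'
      · rw [hA] at h'; cases h'
      · exact h'
    apply ih2; intro X hX
    rcases Multiset.mem_cons.1 hX with rfl | hX
    · simpa [ev] using hB
    · exact h _ (Multiset.mem_cons_of_mem hX)

/-- Non-triviality of `C`: for a propositional variable `p`, the sequent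
`⇒ p` is not derivable in `G3C`; hence not every formula is a theorem of `C`. -/
theorem C_nontrivial (p : Nat) :
    ¬ Gder 0 (.var p) ∧ ¬ (∀ A : Formula, Gder 0 A) := by
  have key : ¬ Gder 0 (Formula.var p) := by
    intro d
    have := ev_sound d (by intro X hX; exact absurd hX (Multiset.notMem_zero X))
    simp [ev] at this
  exact ⟨key, fun h => key (h _)⟩
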